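/- arXiv:1805.00142 — 2 statements merged into one kernel-verified Lean document; each statement's English description precedes it below -/
import Mathlib

section
/- For fixed θ ∈ (0,1), the induced haptic success probability η₁(η₂) = 1 - (1/θ² - 1/(1-η₂)²)^{-1/2} satisfies η₁(η₂) > η₂ if and only if η₂ < 1 - θ·√2 (with η₂ ∈ [0, 1-θ)). -/
open Real

/-- For θ ∈ (0,1) and η₂ ∈ [0, 1-θ), the induced haptic success probability
η₁(η₂) = 1 - (1/θ² - 1/(1-η₂)²)^(-1/2) satisfies η₁(η₂) > η₂ iff η₂ < 1 - θ√2. -/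
theorem eta1_gt_eta2_iff (θ η₂ : ℝ) (hθ0 : 0 < θ) (hθ1 : θ < 1)
    (hη₂0 : 0 ≤ η₂) (hη₂ : η₂ < 1 - θ) :
    (1 - (1 / θ ^ 2 - 1 / (1 - η₂) ^ 2) ^ (-(1 / 2) : ℝ) > η₂) ↔
      η₂ < 1 - θ * Real.sqrt 2 := by
  set x : ℝ := 1 - η₂ with hxdef
  have hθx : θ < x := by simp only [hxdef]; linarith
  have hx0 : 0 < x := lt_trans hθ0 hθx
  have hsq : θ ^ 2 < x ^ 2 := by nlinarith
  have hA : 0 < 1 / θ ^ 2 - 1 / x ^ 2 := by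
    have h1 : (0:ℝ) < θ ^ 2 := by positivity
    have := one_div_lt_one_div_of_lt h1 hsq
    linarith
  have hrw : (1 / θ ^ 2 - 1 / x ^ 2) ^ (-(1 / 2) : ℝ)
      = (Real.sqrt (1 / θ ^ 2 - 1 / x ^ 2))⁻¹ := by
    rw [Real.rpow_neg hA.le, ← Real.sqrt_eq_rpow]
  rw [hrw]
  have hs0 : 0 < Real.sqrt (1 / θ ^ 2 - 1 / x ^ 2) := Real.sqrt_pos.mpr hA
  have key : x⁻¹ ^ 2 < 1 / θ ^ 2 - 1 / x ^ 2 ↔ 2 * θ ^ 2 < x ^ 2 := by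
    rw [inv_pow, inv_eq_one_div, lt_sub_iff_add_lt, ← add_div,
      show (1:ℝ) + 1 = 2 from by norm_num,
      div_lt_div_iff₀ (by positivity) (by positivity)]
    constructor <;> intro h <;> nlinarith
  have sq2 : (θ * Real.sqrt 2) ^ 2 = 2 * θ ^ 2 := by
    rw [mul_pow, Real.sq_sqrt (by norm_num : (0:ℝ) ≤ 2)]; ring
  have key2 : 2 * θ ^ 2 < x ^ 2 ↔ θ * Real.sqrt 2 < x := by
    constructor
    · intro h
      nlinarith [Real.sqrt_nonneg 2, mul_nonneg hθ0.le (Real.sqrt_nonneg 2), hx0]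
    · intro h
      nlinarith [mul_nonneg hθ0.le (Real.sqrt_nonneg 2)]
  constructor
  · intro h
    have h1 : (Real.sqrt (1 / θ ^ 2 - 1 / x ^ 2))⁻¹ < x := by
      simp only [hxdef] at h ⊢; linarith
    have h2 : x⁻¹ < Real.sqrt (1 / θ ^ 2 - 1 / x ^ 2) :=
      (inv_lt_comm₀ hs0 hx0).mp h1
    have h3 : x⁻¹ ^ 2 < 1 / θ ^ 2 - 1 / x ^ 2 := by
      have := (Real.lt_sqrt (by positivity : (0:ℝ) ≤ x⁻¹)).mp h2
      simpa using this
    have h5 := key2.mp (key.mp h3)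
    simp only [hxdef] at h5; linarith
  · intro h
    have h5 : θ * Real.sqrt 2 < x := by simp only [hxdef]; linarith
    have h3 := key.mpr (key2.mpr h5)
    have h2 : x⁻¹ < Real.sqrt (1 / θ ^ 2 - 1 / x ^ 2) :=
      (Real.lt_sqrt (by positivity : (0:ℝ) ≤ x⁻¹)).mpr (by simpa using h3)
    have h1 : (Real.sqrt (1 / θ ^ 2 - 1 / x ^ 2))⁻¹ < x :=
      (inv_lt_comm₀ hs0 hx0).mpr h2
    simp only [hxdef] at h1 ⊢; linarith
end

section
/- Let t > 0, α > 2. Then 1/₂F₁(1, -2/α; 1 - 2/α; -t) lies between (1 + c_L·t)^{-2/α} and (1 + c_U·t)^{-2/α}, where c_L = α/(α-2) and c_U = (2π/(α·sin(2π/α)))^{α/2}; specifically (1 + c_U·t)^{-2/α} ≤ 1/₂F₁(1, -2/α; 1-2/α; -t) ≤ (1 + c_L·t)^{-2/α}. -/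
open Real MeasureTheory

/-- The Gauss hypergeometric value ₂F₁(1, -2/α; 1-2/α; -t) relevant to Poisson
cellular coverage, expressed via its standard integral form:
₂F₁(1, -2/α; 1-2/α; -t) = 1 + t^(2/α) · ∫_{t^(-2/α)}^∞ du/(1+u^(α/2)). -/
noncomputable def twoF₁cov (α t : ℝ) : ℝ :=
  1 + t ^ (2 / α) * ∫ u in Set.Ioi (t ^ (-(2 / α))), (1 + u ^ (α / 2))⁻¹

section CoverageAux

open Set Filter Topology

namespace CovAux

open intervalIntegral in

private lemma beta_c (a : ℝ) (h0 : 0 < a) (h1 : a < 1) :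
    Complex.betaIntegral a (1 - a) = (π : ℂ) / Complex.sin (π * a) := by
  have h1' : (0:ℝ) < 1 - a := by linarith
  have h := Complex.Gamma_mul_Gamma_eq_betaIntegral (s := (a:ℂ)) (t := (1 - (a:ℂ)))
    (by simpa using h0) (by simpa [Complex.sub_re] using h1')
  rw [show (a:ℂ) + (1 - (a:ℂ)) = 1 by ring, Complex.Gamma_one, one_mul] at h
  rw [← h, Complex.Gamma_mul_Gamma_one_sub]

lemma beta_r (a : ℝ) (h0 : 0 < a) (h1 : a < 1) :
    ∫ x in (0:ℝ)..1, x ^ (a - 1) * (1 - x) ^ (-a) = π / Real.sin (π * a) := by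
  have h1' : (0:ℝ) < 1 - a := by linarith
  have key : Complex.betaIntegral a (1 - a)
      = ((∫ x in (0:ℝ)..1, x ^ (a - 1) * (1 - x) ^ (-a) : ℝ) : ℂ) := by
    rw [Complex.betaIntegral, ← intervalIntegral.integral_ofReal]
    refine intervalIntegral.integral_congr_ae ?_
    have : ∀ᵐ (x:ℝ), x ∈ Set.uIoc (0:ℝ) 1 →
        (x:ℂ) ^ ((a:ℂ) - 1) * ((1:ℂ) - x) ^ ((1:ℂ) - a - 1)
          = ((x ^ (a - 1) * (1 - x) ^ (-a) : ℝ) : ℂ) := by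
      filter_upwards with x hx
      rw [Set.uIoc_of_le (by norm_num : (0:ℝ) ≤ 1)] at hx
      have hx0 : (0:ℝ) ≤ x := hx.1.le
      have hx1 : (0:ℝ) ≤ 1 - x := by linarith [hx.2]
      rw [show ((a:ℂ) - 1) = ((a - 1 : ℝ) : ℂ) by push_cast; ring,
        show ((1:ℂ) - (a:ℂ) - 1) = ((-a : ℝ) : ℂ) by push_cast; ring,
        show ((1:ℂ) - (x:ℂ)) = ((1 - x : ℝ) : ℂ) by push_cast; ring,
        ← Complex.ofReal_cpow hx0, ← Complex.ofReal_cpow hx1, ← Complex.ofReal_mul]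
    exact this
  have := beta_c a h0 h1
  rw [key] at this
  have : ((∫ x in (0:ℝ)..1, x ^ (a - 1) * (1 - x) ^ (-a) : ℝ) : ℂ)
      = ((π / Real.sin (π * a) : ℝ) : ℂ) := by
    rw [this]; push_cast [Complex.ofReal_sin]; ring
  exact_mod_cast this

lemma img_aux : (fun s : ℝ => s / (1 - s)) '' Ioo 0 1 = Ioi 0 := by
  ext y; constructor
  · rintro ⟨s, ⟨hs0, hs1⟩, rfl⟩
    exact div_pos hs0 (by linarith)
  · intro hy
    refine ⟨y / (1 + y), ⟨div_pos hy (by linarith [hy.out]), ?_⟩, ?_⟩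
    · rw [div_lt_one (by linarith [hy.out])]; linarith [hy.out]
    · have h1 : (0:ℝ) < 1 + y := by linarith [hy.out]
      field_simp; ring

lemma mellin_one_add (a : ℝ) (h0 : 0 < a) (h1 : a < 1) :
    ∫ x in Ioi (0:ℝ), x ^ (a - 1) / (1 + x) = π / Real.sin (π * a) := by
  have key : ∫ x in Ioi (0:ℝ), x ^ (a - 1) / (1 + x)
      = ∫ s in Ioo (0:ℝ) 1, s ^ (a - 1) * (1 - s) ^ (-a) := by
    rw [← img_aux]
    rw [integral_image_eq_integral_abs_deriv_smul measurableSet_Ioo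
      (f' := fun s : ℝ => (1 - s)^(-2 : ℤ))
      (fun s hs => by
        have h1s : 1 - s ≠ 0 := by rcases hs with ⟨h1', h2⟩; intro h; linarith
        have := (hasDerivAt_id s).div ((hasDerivAt_id s).const_sub 1) h1s
        simpa [zpow_neg, ← sub_eq_neg_add, Pi.div_def] using this.hasDerivWithinAt)
      (fun s hs t ht hst => by
        rcases hs with ⟨hs0, hs1⟩; rcases ht with ⟨ht0, ht1⟩
        have h1 : 1 - s ≠ 0 := by intro h; linarith
        have h2 : 1 - t ≠ 0 := by intro h; linarith
        field_simp at hst; linarith) _]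
    refine setIntegral_congr_fun measurableSet_Ioo (fun s hs => ?_)
    rcases hs with ⟨hs0, hs1⟩
    have h1s : (0:ℝ) < 1 - s := by linarith
    have hx : (0:ℝ) < s / (1 - s) := div_pos hs0 h1s
    have e1 : (1 : ℝ) + s / (1 - s) = 1 / (1 - s) := by field_simp; ring
    have hB : (0:ℝ) < (1 - s) ^ a := Real.rpow_pos_of_pos h1s a
    have e2 : ((1 - s):ℝ) ^ (-2:ℤ) = ((1 - s) ^ 2)⁻¹ := by
      simp [zpow_neg]
    rw [smul_eq_mul, e1, abs_of_pos (by positivity : (0:ℝ) < (1 - s)^(-2:ℤ)),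
      Real.div_rpow hs0.le h1s.le, Real.rpow_sub h1s a 1, Real.rpow_one,
      Real.rpow_neg h1s.le, e2]
    field_simp
  rw [key, ← MeasureTheory.integral_Ioc_eq_integral_Ioo,
    ← intervalIntegral.integral_of_le (by norm_num : (0:ℝ) ≤ 1)]
  exact beta_r a h0 h1

lemma Bval (p : ℝ) (hp : 1 < p) :
    ∫ u in Ioi (0:ℝ), (1 + u ^ p)⁻¹ = (π / p) / Real.sin (π / p) := by
  have hp0 : (0:ℝ) < p := by linarith
  have hq : (1/p) ≠ 0 := by positivity
  rw [← integral_comp_rpow_Ioi (fun y : ℝ => (1 + y ^ p)⁻¹) hq]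
  have hcg : ∀ x ∈ Ioi (0:ℝ), (|1/p| * x ^ (1/p - 1)) • (fun y : ℝ => (1 + y ^ p)⁻¹) (x ^ (1/p))
      = (1/p) * (x ^ (1/p - 1) / (1 + x)) := by
    intro x hx
    have hx0 : (0:ℝ) < x := hx
    have e1 : (x ^ (1/p)) ^ p = x := by
      rw [← Real.rpow_mul hx0.le, one_div, inv_mul_cancel₀ (by positivity : p ≠ 0), Real.rpow_one]
    simp only [e1, smul_eq_mul, abs_of_pos (by positivity : (0:ℝ) < 1/p)]
    rw [mul_assoc, div_eq_mul_inv (x ^ (1/p - 1))]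
  rw [setIntegral_congr_fun measurableSet_Ioi hcg, MeasureTheory.integral_const_mul,
    mellin_one_add (1/p) (by positivity) (by rw [div_lt_one hp0]; linarith), mul_one_div]
  rw [div_eq_mul_inv (π/p), div_eq_mul_inv π, one_div]
  ring


noncomputable def Jf (p x : ℝ) : ℝ := ∫ u in Ioi x, (1 + u ^ p)⁻¹

variable {p : ℝ}

lemma f_meas : Measurable (fun u : ℝ => (1 + u ^ p)⁻¹) := by fun_prop

lemma f_nonneg {u : ℝ} (hu : 0 ≤ u) : 0 ≤ (1 + u ^ p)⁻¹ := by
  have := Real.rpow_nonneg hu p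
  positivity

lemma f_le_one {u : ℝ} (hu : 0 ≤ u) : (1 + u ^ p)⁻¹ ≤ 1 := by
  have := Real.rpow_nonneg hu p
  rw [inv_le_one_iff₀]; right; linarith

lemma integrableOn_f (hp : 1 < p) {x : ℝ} (hx : 0 ≤ x) :
    IntegrableOn (fun u : ℝ => (1 + u ^ p)⁻¹) (Ioi x) := by
  have h0 : IntegrableOn (fun u : ℝ => (1 + u ^ p)⁻¹) (Ioi 0) := by
    rw [← Ioc_union_Ioi_eq_Ioi (zero_le_one (α := ℝ)), integrableOn_union]
    constructor
    · refine Measure.integrableOn_of_bounded (M := 1) (by simp) f_meas.aestronglyMeasurable ?_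
      filter_upwards [ae_restrict_mem measurableSet_Ioc] with u hu
      rw [Real.norm_eq_abs, abs_of_nonneg (f_nonneg hu.1.le)]
      exact f_le_one hu.1.le
    · refine Integrable.mono (g := fun u : ℝ => u ^ (-p))
        (integrableOn_Ioi_rpow_of_lt (by linarith) one_pos)
        f_meas.aestronglyMeasurable ?_
      filter_upwards [ae_restrict_mem measurableSet_Ioi] with u hu
      have hu0 : (0:ℝ) < u := lt_trans one_pos hu
      have h1 : (0:ℝ) < u ^ p := Real.rpow_pos_of_pos hu0 p
      rw [Real.norm_eq_abs, Real.norm_eq_abs, abs_of_nonneg (f_nonneg hu0.le),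
        abs_of_nonneg (Real.rpow_nonneg hu0.le _), Real.rpow_neg hu0.le]
      exact inv_anti₀ h1 (by linarith)
  exact h0.mono_set (Ioi_subset_Ioi hx)

lemma J_split (hp : 1 < p) {a b : ℝ} (ha : 0 ≤ a) (hab : a ≤ b) :
    Jf p a = (∫ u in Ioc a b, (1 + u ^ p)⁻¹) + Jf p b := by
  rw [Jf, Jf, ← Ioc_union_Ioi_eq_Ioi hab,
    setIntegral_union Ioc_disjoint_Ioi_same measurableSet_Ioi
      ((integrableOn_f hp ha).mono_set Ioc_subset_Ioi_self)
      (integrableOn_f hp (ha.trans hab))]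

lemma J_nonneg (hp : 1 < p) {x : ℝ} (hx : 0 ≤ x) : 0 ≤ Jf p x :=
  setIntegral_nonneg measurableSet_Ioi (fun u hu => f_nonneg (hx.trans (le_of_lt hu)))

lemma J_le (hp : 1 < p) {x : ℝ} (hx : 0 < x) : Jf p x ≤ x ^ (1 - p) / (p - 1) := by
  have h1 : Jf p x ≤ ∫ u in Ioi x, u ^ (-p) := by
    refine setIntegral_mono_on (integrableOn_f hp hx.le)
      (integrableOn_Ioi_rpow_of_lt (by linarith) hx) measurableSet_Ioi (fun u hu => ?_)
    have hu0 : 0 < u := hx.trans hu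
    have h2 : (0:ℝ) < u ^ p := Real.rpow_pos_of_pos hu0 p
    rw [Real.rpow_neg hu0.le]
    exact inv_anti₀ h2 (by linarith)
  rw [integral_Ioi_rpow_of_lt (by linarith) hx] at h1
  refine h1.trans_eq ?_
  rw [show -p + 1 = 1 - p by ring]
  rw [div_eq_div_iff (by linarith) (by linarith)]
  ring

lemma J_sub_le (hp : 1 < p) {x : ℝ} (hx : 0 < x) :
    Jf p 0 - x ≤ Jf p x ∧ Jf p x ≤ Jf p 0 := by
  have hs := J_split hp le_rfl hx.le
  have h1 : 0 ≤ ∫ u in Ioc 0 x, (1 + u ^ p)⁻¹ :=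
    setIntegral_nonneg measurableSet_Ioc (fun u hu => f_nonneg hu.1.le)
  have h2 : (∫ u in Ioc 0 x, (1 + u ^ p)⁻¹) ≤ x := by
    have : (∫ u in Ioc 0 x, (1 + u ^ p)⁻¹) ≤ ∫ _ in Ioc 0 x, (1:ℝ) := by
      refine setIntegral_mono_on ?_ (integrableOn_const (by simp [Real.volume_Ioc]))
        measurableSet_Ioc (fun u hu => f_le_one hu.1.le)
      exact ((integrableOn_f hp le_rfl).mono_set Ioc_subset_Ioi_self)
    simpa [Real.volume_Ioc, hx.le] using this
  constructor <;> linarith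

lemma hasDerivAt_J (hp : 1 < p) {x : ℝ} (hx : 0 < x) :
    HasDerivAt (Jf p) (-(1 + x ^ p)⁻¹) x := by
  have hI : IntervalIntegrable (fun u : ℝ => (1 + u ^ p)⁻¹) volume 0 x :=
    (intervalIntegrable_iff_integrableOn_Ioc_of_le hx.le).2
      ((integrableOn_f hp le_rfl).mono_set Ioc_subset_Ioi_self)
  have hcont : ContinuousAt (fun u : ℝ => (1 + u ^ p)⁻¹) x := by
    have h1 : ContinuousAt (fun u : ℝ => u ^ p) x :=
      Real.continuousAt_rpow_const x p (Or.inl hx.ne')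
    have h2 : ContinuousAt (fun u : ℝ => 1 + u ^ p) x := continuousAt_const.add h1
    have h3 : (1 : ℝ) + x ^ p ≠ 0 := by
      have := Real.rpow_pos_of_pos hx p; positivity
    exact h2.inv₀ h3
  have hftc := intervalIntegral.integral_hasDerivAt_right hI
    f_meas.stronglyMeasurable.stronglyMeasurableAtFilter hcont
  have hmain : HasDerivAt (fun y => Jf p 0 - ∫ u in (0:ℝ)..y, (1 + u ^ p)⁻¹)
      (-(1 + x ^ p)⁻¹) x := by
    simpa using (hftc.const_sub (Jf p 0))
  refine hmain.congr_of_eventuallyEq ?_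
  filter_upwards [isOpen_Ioi.mem_nhds (show x ∈ Ioi (0:ℝ) from hx)] with y hy
  rw [intervalIntegral.integral_of_le (le_of_lt hy), J_split hp le_rfl (le_of_lt hy)]
  ring

noncomputable def hfun (p c t : ℝ) : ℝ :=
  (1 + c * t) ^ p⁻¹ * t ^ (-p⁻¹) - t ^ (-p⁻¹) - Jf p (t ^ (-p⁻¹))

lemma hasDerivAt_hfun (hp : 1 < p) {c t : ℝ} (hc : 0 < c) (ht : 0 < t) :
    HasDerivAt (hfun p c)
      (p⁻¹ * t ^ (-p⁻¹ - 1) * ((1 + t)⁻¹ - (1 + c * t) ^ (p⁻¹ - 1))) t := by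
  have hb0 : (0:ℝ) < p⁻¹ := by positivity
  have h1ct : (0:ℝ) < 1 + c * t := by positivity
  have hA : HasDerivAt (fun t : ℝ => (1 + c * t) ^ p⁻¹)
      (c * p⁻¹ * (1 + c * t) ^ (p⁻¹ - 1)) t := by
    have h := ((hasDerivAt_id t).const_mul c).const_add 1
    simpa [mul_assoc] using h.rpow_const (Or.inl h1ct.ne')
  have hB : HasDerivAt (fun t : ℝ => t ^ (-p⁻¹)) (-p⁻¹ * t ^ (-p⁻¹ - 1)) t :=
    Real.hasDerivAt_rpow_const (Or.inl ht.ne')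
  have hx : (0:ℝ) < t ^ (-p⁻¹) := Real.rpow_pos_of_pos ht _
  have hJc : HasDerivAt (fun t : ℝ => Jf p (t ^ (-p⁻¹)))
      (-(1 + (t ^ (-p⁻¹)) ^ p)⁻¹ * (-p⁻¹ * t ^ (-p⁻¹ - 1))) t :=
    by have h := (hasDerivAt_J hp hx).comp t hB; exact h
  have htotal := ((hA.mul hB).sub hB).sub hJc
  refine htotal.congr_deriv ?_
  have e1 : (t ^ (-p⁻¹)) ^ p = t⁻¹ := by
    rw [← Real.rpow_mul ht.le, show -p⁻¹ * p = -1 by field_simp, Real.rpow_neg_one]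
  rw [e1]
  have e2 : (1 + c * t) ^ p⁻¹ = (1 + c * t) ^ (p⁻¹ - 1) * (1 + c * t) := by
    nth_rewrite 1 [show p⁻¹ = (p⁻¹ - 1) + 1 by ring]
    rw [Real.rpow_add_one h1ct.ne']
  have e3 : t ^ (-p⁻¹) = t ^ (-p⁻¹ - 1) * t := by
    nth_rewrite 1 [show -p⁻¹ = (-p⁻¹ - 1) + 1 by ring]
    rw [Real.rpow_add_one ht.ne']
  rw [e2, e3]
  have h1t : (0:ℝ) < 1 + t := by linarith
  have h1ti : (1 + t⁻¹) = (1 + t) / t := by field_simp; ring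
  rw [h1ti]
  rw [div_eq_mul_inv (1+t) t, mul_inv, inv_inv]
  field_simp
  ring

lemma tendsto_hfun_zero (hp : 1 < p) {c : ℝ} (hc : 0 < c) :
    Tendsto (hfun p c) (𝓝[>] 0) (𝓝 0) := by
  have hb0 : (0:ℝ) < p⁻¹ := by positivity
  have hb1 : p⁻¹ < 1 := by
    rw [inv_lt_one_iff₀]; right; exact hp
  have hT1 : Tendsto (fun t : ℝ => ((1 + c * t) ^ p⁻¹ - 1) * t ^ (-p⁻¹)) (𝓝[>] 0) (𝓝 0) := by
    have hup : Tendsto (fun t : ℝ => p⁻¹ * c * t ^ (1 - p⁻¹)) (𝓝[>] 0) (𝓝 0) := by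
      have h1 : Tendsto (fun t : ℝ => t ^ (1 - p⁻¹)) (𝓝 0) (𝓝 0) := by
        have := (Real.continuousAt_rpow_const 0 (1 - p⁻¹) (Or.inr (by linarith))).tendsto
        simpa [Real.zero_rpow (show (1:ℝ) - p⁻¹ ≠ 0 by linarith)] using this
      have h2 := (h1.const_mul (p⁻¹ * c)).mono_left
        (nhdsWithin_le_nhds : 𝓝[>] (0:ℝ) ≤ 𝓝 0)
      simpa using h2
    refine tendsto_of_tendsto_of_tendsto_of_le_of_le' tendsto_const_nhds hup ?_ ?_
    · filter_upwards [self_mem_nhdsWithin] with t (ht : 0 < t)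
      have h1 : (1:ℝ) ≤ 1 + c * t := by nlinarith
      have h2 : (1:ℝ) ≤ (1 + c * t) ^ p⁻¹ := Real.one_le_rpow h1 hb0.le
      have h3 : (0:ℝ) ≤ t ^ (-p⁻¹) := Real.rpow_nonneg ht.le _
      exact mul_nonneg (by linarith) h3
    · filter_upwards [self_mem_nhdsWithin] with t (ht : 0 < t)
      have hber : (1 + c * t) ^ p⁻¹ ≤ 1 + p⁻¹ * (c * t) :=
        rpow_one_add_le_one_add_mul_self (by nlinarith) hb0.le hb1.le
      have h3 : (0:ℝ) ≤ t ^ (-p⁻¹) := Real.rpow_nonneg ht.le _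
      have h4 : ((1 + c * t) ^ p⁻¹ - 1) * t ^ (-p⁻¹) ≤ (p⁻¹ * (c * t)) * t ^ (-p⁻¹) := by
        apply mul_le_mul_of_nonneg_right (by linarith) h3
      refine h4.trans_eq ?_
      have e : t * t ^ (-p⁻¹) = t ^ (1 - p⁻¹) := by
        rw [show (1:ℝ) - p⁻¹ = 1 + (-p⁻¹) by ring, Real.rpow_add ht, Real.rpow_one]
      rw [← e]; ring
  have hT2 : Tendsto (fun t : ℝ => Jf p (t ^ (-p⁻¹))) (𝓝[>] 0) (𝓝 0) := by
    have hup : Tendsto (fun t : ℝ => t ^ (1 - p⁻¹) / (p - 1)) (𝓝[>] 0) (𝓝 0) := by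
      have h1 : Tendsto (fun t : ℝ => t ^ (1 - p⁻¹)) (𝓝 0) (𝓝 0) := by
        have := (Real.continuousAt_rpow_const 0 (1 - p⁻¹) (Or.inr (by linarith))).tendsto
        simpa [Real.zero_rpow (show (1:ℝ) - p⁻¹ ≠ 0 by linarith)] using this
      have h2 := (h1.div_const (p - 1)).mono_left
        (nhdsWithin_le_nhds : 𝓝[>] (0:ℝ) ≤ 𝓝 0)
      simpa using h2
    refine tendsto_of_tendsto_of_tendsto_of_le_of_le' tendsto_const_nhds hup ?_ ?_
    · filter_upwards [self_mem_nhdsWithin] with t (ht : 0 < t)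
      exact J_nonneg hp (Real.rpow_nonneg ht.le _)
    · filter_upwards [self_mem_nhdsWithin] with t (ht : 0 < t)
      have hx : (0:ℝ) < t ^ (-p⁻¹) := Real.rpow_pos_of_pos ht _
      refine (J_le hp hx).trans_eq ?_
      congr 1
      rw [← Real.rpow_mul ht.le]
      congr 1
      field_simp
      ring
  have := hT1.sub hT2
  rw [sub_zero] at this
  refine Tendsto.congr' ?_ this
  filter_upwards [self_mem_nhdsWithin] with t (ht : 0 < t)
  rw [hfun]; ring

lemma tendsto_hfun_top (hp : 1 < p) {c : ℝ} (hc : 0 < c) (hcB : c ^ p⁻¹ = Jf p 0) :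
    Tendsto (hfun p c) atTop (𝓝 0) := by
  have hb0 : (0:ℝ) < p⁻¹ := by positivity
  have hT1 : Tendsto (fun t : ℝ => (1 + c * t) ^ p⁻¹ * t ^ (-p⁻¹)) atTop (𝓝 (Jf p 0)) := by
    have h1 : Tendsto (fun t : ℝ => t⁻¹ + c) atTop (𝓝 c) := by
      simpa using tendsto_inv_atTop_zero.add (tendsto_const_nhds (x := c))
    have h2 : Tendsto (fun t : ℝ => (t⁻¹ + c) ^ p⁻¹) atTop (𝓝 (c ^ p⁻¹)) :=
      ((Real.continuousAt_rpow_const c p⁻¹ (Or.inl hc.ne')).tendsto).comp h1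
    rw [hcB] at h2
    refine Tendsto.congr' ?_ h2
    filter_upwards [eventually_gt_atTop (0:ℝ)] with t ht
    have e1 : t ^ (-p⁻¹) = (t⁻¹) ^ p⁻¹ := by
      rw [← Real.rpow_neg_one t, ← Real.rpow_mul ht.le, neg_one_mul]
    rw [e1, ← Real.mul_rpow (by positivity) (by positivity),
      show (1 + c * t) * t⁻¹ = t⁻¹ + c by field_simp; try ring]
  have hT2 : Tendsto (fun t : ℝ => t ^ (-p⁻¹)) atTop (𝓝 0) := tendsto_rpow_neg_atTop hb0
  have hT3 : Tendsto (fun t : ℝ => Jf p (t ^ (-p⁻¹))) atTop (𝓝 (Jf p 0)) := by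
    have hlow : Tendsto (fun t : ℝ => Jf p 0 - t ^ (-p⁻¹)) atTop (𝓝 (Jf p 0)) := by
      have := tendsto_const_nhds (x := Jf p 0) (f := atTop (α := ℝ)) |>.sub hT2
      simpa using this
    refine tendsto_of_tendsto_of_tendsto_of_le_of_le' hlow tendsto_const_nhds ?_ ?_
    · filter_upwards [eventually_gt_atTop (0:ℝ)] with t ht
      exact (J_sub_le hp (Real.rpow_pos_of_pos ht _)).1
    · filter_upwards [eventually_gt_atTop (0:ℝ)] with t ht
      exact (J_sub_le hp (Real.rpow_pos_of_pos ht _)).2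
  have hfin := (hT1.sub hT2).sub hT3
  rw [sub_zero, sub_self] at hfin
  exact hfin

lemma hfun_nonpos (hp : 1 < p) {t : ℝ} (ht : 0 < t) :
    hfun p (1 - p⁻¹)⁻¹ t ≤ 0 := by
  have hb0 : (0:ℝ) < p⁻¹ := by positivity
  have hb1 : p⁻¹ < 1 := by rw [inv_lt_one_iff₀]; right; exact hp
  have hγ : (0:ℝ) < 1 - p⁻¹ := by linarith
  set c : ℝ := (1 - p⁻¹)⁻¹ with hcdef
  have hc : 0 < c := by positivity
  have hmono : AntitoneOn (hfun p c) (Ioi 0) := by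
    refine antitoneOn_of_hasDerivWithinAt_nonpos (convex_Ioi 0)
      (fun s hs => (hasDerivAt_hfun hp hc hs).continuousAt.continuousWithinAt)
      (fun s hs => ((hasDerivAt_hfun hp hc (by
        rw [interior_Ioi] at hs; exact hs)).hasDerivWithinAt)) (fun s hs => ?_)
    rw [interior_Ioi] at hs
    have hs0 : (0:ℝ) < s := hs
    have h1cs : (0:ℝ) < 1 + c * s := by positivity
    have hber : (1 + c * s) ^ (1 - p⁻¹) ≤ 1 + s := by
      have := rpow_one_add_le_one_add_mul_self (s := c * s) (by nlinarith) hγ.le (by linarith)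
      have e : (1 - p⁻¹) * (c * s) = s := by
        rw [hcdef, ← mul_assoc, mul_inv_cancel₀ hγ.ne']; ring
      linarith [this, e ▸ this]
    have hw : (1 + s)⁻¹ - (1 + c * s) ^ (p⁻¹ - 1) ≤ 0 := by
      have e : (1 + c * s) ^ (p⁻¹ - 1) = ((1 + c * s) ^ (1 - p⁻¹))⁻¹ := by
        rw [show p⁻¹ - 1 = -(1 - p⁻¹) by ring, Real.rpow_neg h1cs.le]
      rw [e]
      have h2 : (0:ℝ) < (1 + c * s) ^ (1 - p⁻¹) := Real.rpow_pos_of_pos h1cs _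
      have h3 : (1 + s)⁻¹ ≤ ((1 + c * s) ^ (1 - p⁻¹))⁻¹ := by
        apply inv_anti₀ h2 hber
      linarith
    have hpos : (0:ℝ) ≤ p⁻¹ * s ^ (-p⁻¹ - 1) := by
      have := Real.rpow_nonneg hs0.le (-p⁻¹ - 1); positivity
    exact mul_nonpos_of_nonneg_of_nonpos hpos hw
  refine ge_of_tendsto (tendsto_hfun_zero hp hc) ?_
  filter_upwards [Ioo_mem_nhdsGT_of_mem (show (0:ℝ) ∈ Ico 0 t from ⟨le_rfl, ht⟩)] with s hs
  exact hmono (show s ∈ Ioi (0:ℝ) from hs.1) (show t ∈ Ioi (0:ℝ) from ht) hs.2.le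

lemma hfun_nonneg (hp : 1 < p) {c : ℝ} (hc : 0 < c) (hcB : c ^ p⁻¹ = Jf p 0)
    {t : ℝ} (ht : 0 < t) : 0 ≤ hfun p c t := by
  have hb0 : (0:ℝ) < p⁻¹ := by positivity
  have hb1 : p⁻¹ < 1 := by rw [inv_lt_one_iff₀]; right; exact hp
  have hγ0 : (0:ℝ) < 1 - p⁻¹ := by linarith
  set φ : ℝ → ℝ := fun s => (1 + c * s) ^ (1 - p⁻¹) - 1 - s with hφdef
  have hφ0 : φ 0 = 0 := by simp [hφdef]
  have hconc : ∀ x y a b : ℝ, 0 ≤ x → 0 ≤ y → 0 ≤ a → 0 ≤ b → a + b = 1 →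
      a * φ x + b * φ y ≤ φ (a * x + b * y) := by
    intro x y a b hx hy ha hb hab
    have h1cx : (0:ℝ) ≤ 1 + c * x := by positivity
    have h1cy : (0:ℝ) ≤ 1 + c * y := by positivity
    have hr := (Real.concaveOn_rpow hγ0.le (by linarith)).2
      (mem_Ici.2 h1cx) (mem_Ici.2 h1cy) ha hb hab
    simp only [smul_eq_mul] at hr
    have e : a * (1 + c * x) + b * (1 + c * y) = 1 + c * (a * x + b * y) := by
      have : a * 1 + b * 1 = 1 := by rw [mul_one, mul_one]; exact hab
      ring_nf
      nlinarith [hab]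
    rw [e] at hr
    simp only [hφdef]
    nlinarith [hr, hab]
  -- sign of w from sign of φ
  have hwpos : ∀ s : ℝ, 0 < s → 0 ≤ φ s →
      0 ≤ (1 + s)⁻¹ - (1 + c * s) ^ (p⁻¹ - 1) := by
    intro s hs hφs
    have h1cs : (0:ℝ) < 1 + c * s := by positivity
    have e : (1 + c * s) ^ (p⁻¹ - 1) = ((1 + c * s) ^ (1 - p⁻¹))⁻¹ := by
      rw [show p⁻¹ - 1 = -(1 - p⁻¹) by ring, Real.rpow_neg h1cs.le]
    rw [e]
    have h1s : (0:ℝ) < 1 + s := by linarith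
    have : 1 + s ≤ (1 + c * s) ^ (1 - p⁻¹) := by
      simp only [hφdef] at hφs; linarith
    have h3 : ((1 + c * s) ^ (1 - p⁻¹))⁻¹ ≤ (1 + s)⁻¹ := inv_anti₀ h1s this
    linarith
  have hwneg : ∀ s : ℝ, 0 < s → φ s ≤ 0 →
      (1 + s)⁻¹ - (1 + c * s) ^ (p⁻¹ - 1) ≤ 0 := by
    intro s hs hφs
    have h1cs : (0:ℝ) < 1 + c * s := by positivity
    have e : (1 + c * s) ^ (p⁻¹ - 1) = ((1 + c * s) ^ (1 - p⁻¹))⁻¹ := by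
      rw [show p⁻¹ - 1 = -(1 - p⁻¹) by ring, Real.rpow_neg h1cs.le]
    rw [e]
    have h2 : (0:ℝ) < (1 + c * s) ^ (1 - p⁻¹) := Real.rpow_pos_of_pos h1cs _
    have : (1 + c * s) ^ (1 - p⁻¹) ≤ 1 + s := by
      simp only [hφdef] at hφs; linarith
    have h3 : (1 + s)⁻¹ ≤ ((1 + c * s) ^ (1 - p⁻¹))⁻¹ := inv_anti₀ h2 this
    linarith
  rcases le_or_gt 0 (φ t) with hcase | hcase
  · -- φ t ≥ 0 : monotone on Ioc 0 t, use limit at 0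
    have hφs : ∀ s : ℝ, 0 < s → s ≤ t → 0 ≤ φ s := by
      intro s hs hst
      have h := hconc 0 t (1 - s / t) (s / t) le_rfl ht.le
        (by rw [sub_nonneg]; exact div_le_one_of_le₀ hst ht.le)
        (by positivity) (by ring)
      rw [hφ0, mul_zero, zero_add, zero_add, div_mul_cancel₀ _ ht.ne'] at h
      have h2 : 0 ≤ s / t * φ t := mul_nonneg (by positivity) hcase
      exact h2.trans h
    have hmono : MonotoneOn (hfun p c) (Ioc 0 t) := by
      refine monotoneOn_of_hasDerivWithinAt_nonneg (convex_Ioc 0 t)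
        (fun s hs => (hasDerivAt_hfun hp hc hs.1).continuousAt.continuousWithinAt)
        (fun s hs => ((hasDerivAt_hfun hp hc (by
          rw [interior_Ioc] at hs; exact hs.1)).hasDerivWithinAt)) (fun s hs => ?_)
      rw [interior_Ioc] at hs
      have hs0 : (0:ℝ) < s := hs.1
      have hw := hwpos s hs0 (hφs s hs0 hs.2.le)
      have hpos : (0:ℝ) ≤ p⁻¹ * s ^ (-p⁻¹ - 1) := by
        have := Real.rpow_nonneg hs0.le (-p⁻¹ - 1); positivity
      exact mul_nonneg hpos hw
    refine le_of_tendsto (tendsto_hfun_zero hp hc) ?_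
    filter_upwards [Ioo_mem_nhdsGT_of_mem (show (0:ℝ) ∈ Ico 0 t from ⟨le_rfl, ht⟩)] with s hs
    exact hmono (show s ∈ Ioc 0 t from ⟨hs.1, hs.2.le⟩) (show t ∈ Ioc 0 t from ⟨ht, le_rfl⟩) hs.2.le
  · -- φ t < 0 : antitone on Ici t, use limit at ∞
    have hφs : ∀ s : ℝ, t < s → φ s ≤ 0 := by
      intro s hst
      have hs0 : 0 < s := ht.trans hst
      have h := hconc 0 s (1 - t / s) (t / s) le_rfl hs0.le
        (by rw [sub_nonneg]; exact div_le_one_of_le₀ hst.le hs0.le)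
        (by positivity) (by ring)
      rw [hφ0, mul_zero, zero_add, zero_add, div_mul_cancel₀ _ hs0.ne'] at h
      by_contra hcon
      push_neg at hcon
      have h2 : 0 < t / s * φ s := mul_pos (by positivity) hcon
      exact absurd ((h2.trans_le h).trans hcase) (lt_irrefl 0)
    have hmono : AntitoneOn (hfun p c) (Ici t) := by
      refine antitoneOn_of_hasDerivWithinAt_nonpos (convex_Ici t)
        (fun s hs => (hasDerivAt_hfun hp hc (ht.trans_le hs)).continuousAt.continuousWithinAt)
        (fun s hs => ((hasDerivAt_hfun hp hc (by
          rw [interior_Ici] at hs; exact ht.trans hs)).hasDerivWithinAt)) (fun s hs => ?_)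
      rw [interior_Ici] at hs
      have hs0 : (0:ℝ) < s := ht.trans hs
      have hw := hwneg s hs0 (hφs s hs)
      have hpos : (0:ℝ) ≤ p⁻¹ * s ^ (-p⁻¹ - 1) := by
        have := Real.rpow_nonneg hs0.le (-p⁻¹ - 1); positivity
      exact mul_nonpos_of_nonneg_of_nonpos hpos hw
    refine le_of_tendsto (tendsto_hfun_top hp hc hcB) ?_
    filter_upwards [eventually_ge_atTop t] with s hs
    exact hmono self_mem_Ici (show s ∈ Ici t from hs) hs

lemma F_bounds (hp : 1 < p) {t : ℝ} (ht : 0 < t) :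
    (1 + (1 - p⁻¹)⁻¹ * t) ^ p⁻¹ ≤ 1 + t ^ p⁻¹ * Jf p (t ^ (-p⁻¹)) ∧
    1 + t ^ p⁻¹ * Jf p (t ^ (-p⁻¹)) ≤ (1 + (Jf p 0) ^ p * t) ^ p⁻¹ := by
  have hb0 : (0:ℝ) < p⁻¹ := by positivity
  have hb1 : p⁻¹ < 1 := by rw [inv_lt_one_iff₀]; right; exact hp
  have hY : (0:ℝ) < t ^ p⁻¹ := Real.rpow_pos_of_pos ht _
  have e : t ^ p⁻¹ * t ^ (-p⁻¹) = 1 := by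
    rw [← Real.rpow_add ht, add_neg_cancel, Real.rpow_zero]
  have hJf0 : Jf p 0 = π / p / Real.sin (π / p) := by rw [Jf]; exact Bval p hp
  have hB0 : 0 < Jf p 0 := by
    rw [hJf0]
    have h1 : 0 < π / p := by positivity
    have h2 : π / p < π := by
      rw [div_lt_iff₀ (by linarith : (0:ℝ) < p)]
      nlinarith [pi_pos]
    exact div_pos h1 (Real.sin_pos_of_pos_of_lt_pi h1 h2)
  constructor
  · have h := hfun_nonpos hp ht
    rw [hfun] at h
    have h2 := mul_le_mul_of_nonneg_left h hY.le
    rw [mul_zero] at h2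
    have h3 : (1 + (1 - p⁻¹)⁻¹ * t) ^ p⁻¹ * (t ^ p⁻¹ * t ^ (-p⁻¹))
        ≤ t ^ p⁻¹ * t ^ (-p⁻¹) + t ^ p⁻¹ * Jf p (t ^ (-p⁻¹)) := by linarith [h2]
    rw [e] at h3
    linarith [h3]
  · have hcB : ((Jf p 0) ^ p) ^ p⁻¹ = Jf p 0 := by
      rw [← Real.rpow_mul hB0.le, mul_inv_cancel₀ (by linarith : p ≠ 0), Real.rpow_one]
    have hc : (0:ℝ) < (Jf p 0) ^ p := Real.rpow_pos_of_pos hB0 _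
    have h := hfun_nonneg hp hc hcB ht
    rw [hfun] at h
    have h2 := mul_le_mul_of_nonneg_left h hY.le
    rw [mul_zero] at h2
    have h3 : t ^ p⁻¹ * t ^ (-p⁻¹) + t ^ p⁻¹ * Jf p (t ^ (-p⁻¹))
        ≤ (1 + (Jf p 0) ^ p * t) ^ p⁻¹ * (t ^ p⁻¹ * t ^ (-p⁻¹)) := by linarith [h2]
    rw [e] at h3
    linarith [h3]

end CovAux

open CovAux in
theorem coverage_bounds' (α t : ℝ) (hα : 2 < α) (ht : 0 < t) :
    (1 + (2 * π / (α * Real.sin (2 * π / α))) ^ (α / 2) * t) ^ (-(2 / α))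
      ≤ 1 / (1 + t ^ (2 / α) * ∫ u in Ioi (t ^ (-(2 / α))), (1 + u ^ (α / 2))⁻¹) ∧
    1 / (1 + t ^ (2 / α) * ∫ u in Ioi (t ^ (-(2 / α))), (1 + u ^ (α / 2))⁻¹)
      ≤ (1 + (α / (α - 2)) * t) ^ (-(2 / α)) := by
  have hα0 : (0:ℝ) < α := by linarith
  have hp : (1:ℝ) < α / 2 := by linarith
  have hb : (α / 2)⁻¹ = 2 / α := by rw [inv_div]
  have hFb := F_bounds (p := α / 2) hp ht
  rw [hb] at hFb
  set F : ℝ := 1 + t ^ (2 / α) * ∫ u in Ioi (t ^ (-(2 / α))), (1 + u ^ (α / 2))⁻¹ with hFdef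
  have hJf : Jf (α / 2) (t ^ (-(2 / α))) = ∫ u in Ioi (t ^ (-(2 / α))), (1 + u ^ (α / 2))⁻¹ := rfl
  rw [hJf] at hFb
  have hcL : (1 - 2 / α)⁻¹ = α / (α - 2) := by
    rw [show (1:ℝ) - 2 / α = (α - 2) / α by field_simp, inv_div]
  have hsin : (0:ℝ) < Real.sin (2 * π / α) := by
    have h1 : 0 < 2 * π / α := by positivity
    have h2 : 2 * π / α < π := by
      rw [div_lt_iff₀ hα0]
      nlinarith [pi_pos]
    exact Real.sin_pos_of_pos_of_lt_pi h1 h2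
  have hcU : Jf (α / 2) 0 = 2 * π / (α * Real.sin (2 * π / α)) := by
    rw [Jf, Bval _ hp, show π / (α / 2) = 2 * π / α by field_simp, div_div]
  rw [hcL, hcU] at hFb
  have hcU0 : (0:ℝ) < 2 * π / (α * Real.sin (2 * π / α)) := by positivity
  have hcL0 : (0:ℝ) < α / (α - 2) := by
    apply div_pos hα0; linarith
  have hL0 : (0:ℝ) < (1 + α / (α - 2) * t) ^ (2 / α) :=
    Real.rpow_pos_of_pos (by nlinarith) _
  have hU0 : (0:ℝ) < (1 + (2 * π / (α * Real.sin (2 * π / α))) ^ (α / 2) * t) ^ (2 / α) := by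
    have := Real.rpow_pos_of_pos hcU0 (α / 2)
    exact Real.rpow_pos_of_pos (by nlinarith) _
  have hF0 : (0:ℝ) < F := lt_of_lt_of_le hL0 hFb.1
  constructor
  · rw [Real.rpow_neg (by positivity : (0:ℝ) ≤ 1 + (2 * π / (α * Real.sin (2 * π / α))) ^ (α / 2) * t)]
    rw [one_div]
    exact inv_anti₀ hF0 hFb.2
  · rw [Real.rpow_neg (by nlinarith : (0:ℝ) ≤ 1 + α / (α - 2) * t), one_div]
    exact inv_anti₀ hL0 hFb.1


end CoverageAux

/-- The exact SIR coverage probability 1/₂F₁(1,-2/α;1-2/α;-t) lies between the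
closed-form bounds (1 + c_U·t)^(-2/α) and (1 + c_L·t)^(-2/α), where
c_L = α/(α-2) and c_U = (2π/(α·sin(2π/α)))^(α/2). -/
theorem coverage_bounds (α t : ℝ) (hα : 2 < α) (ht : 0 < t) :
    (1 + (2 * π / (α * Real.sin (2 * π / α))) ^ (α / 2) * t) ^ (-(2 / α))
      ≤ 1 / twoF₁cov α t ∧
    1 / twoF₁cov α t ≤ (1 + (α / (α - 2)) * t) ^ (-(2 / α)) := by
  simp only [twoF₁cov]
  exact coverage_bounds' α t hα ht
end
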